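/- (Mean-zero property of the efficient influence function, Theorem 2.) Fix a* ∈ {0,1} and suppose c := μ(A=a*, S=0) > 0 and that every w with μ(W=w) > 0 satisfies μ(W=w, A=1, S=1) > 0 and μ(W=w, A=0, S=1) > 0. Define, for ω ∈ Ω, D(ω) := 1{A=1,S=1}(ω)·g₍a*,0₎(W(ω))/(c·g₍1,1₎(W(ω)))·(ΔY(ω) − m₁(W(ω))) − 1{A=0,S=1}(ω)·g₍a*,0₎(W(ω))/(c·g₍0,1₎(W(ω)))·(ΔY(ω) − m₀(W(ω))) + (1{A=a*,S=0}(ω)/c)·(m₁(W(ω)) − m₀(W(ω))) − ψ(a*), with all nuisance functions evaluated at their true values. Then E_μ[D] = 0. -/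

import Mathlib

open MeasureTheory ProbabilityTheory
open scoped Classical

noncomputable section

/-- Conditional expectation of `X` given the event `E`. -/
def cexp {Ω : Type*} [MeasurableSpace Ω] (μ : Measure Ω) (X : Ω → ℝ) (E : Set Ω) : ℝ :=
  ∫ ω, X ω ∂(μ[|E])

/-- The event `{W = w, A = a, S = s}`. -/
def evtWAS {Ω 𝒲 : Type*} (W : Ω → 𝒲) (A S : Ω → Bool) (w : 𝒲) (a s : Bool) : Set Ω :=
  {ω | W ω = w ∧ A ω = a ∧ S ω = s}

/-- The event `{A = a, S = s}`. -/
def evtAS {Ω : Type*} (A S : Ω → Bool) (a s : Bool) : Set Ω :=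
  {ω | A ω = a ∧ S ω = s}

/-- The outcome-difference regression `m_a(w) = E[Y₁ - Y₀ | W = w, A = a, S = 1]`. -/
def mfun {Ω 𝒲 : Type*} [MeasurableSpace Ω] (μ : Measure Ω) (W : Ω → 𝒲) (A S : Ω → Bool)
    (Y₀ Y₁ : Ω → ℝ) (a : Bool) (w : 𝒲) : ℝ :=
  cexp μ (fun ω => Y₁ ω - Y₀ ω) (evtWAS W A S w a true)

/-- The true propensity `g_{a,s}(w) = μ({A = a, S = s} | {W = w})`. -/
def gprop {Ω 𝒲 : Type*} [MeasurableSpace Ω] (μ : Measure Ω) (W : Ω → 𝒲) (A S : Ω → Bool)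
    (a s : Bool) (w : 𝒲) : ℝ :=
  ((μ[|{ω | W ω = w}]) {ω | A ω = a ∧ S ω = s}).toReal

/-- The target statistical parameter `ψ(a*) = E[m₁(W) − m₀(W) | A = a*, S = 0]`. -/
def psiParam {Ω 𝒲 : Type*} [MeasurableSpace Ω] (μ : Measure Ω) (W : Ω → 𝒲) (A S : Ω → Bool)
    (Y₀ Y₁ : Ω → ℝ) (astar : Bool) : ℝ :=
  cexp μ (fun ω => mfun μ W A S Y₀ Y₁ true (W ω) - mfun μ W A S Y₀ Y₁ false (W ω))
    (evtAS A S astar false)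

/-- Auxiliary: `cexp` as a normalized set integral. -/
lemma cexp_eq_inv_mul {Ω : Type*} [MeasurableSpace Ω] (μ : Measure Ω) (X : Ω → ℝ) (E : Set Ω) :
    cexp μ X E = ((μ E).toReal)⁻¹ * ∫ ω in E, X ω ∂μ := by
  rw [cexp, ProbabilityTheory.cond, integral_smul_measure, ENNReal.toReal_inv, smul_eq_mul]

/-- Auxiliary: the centered set integral vanishes. -/
lemma setIntegral_sub_cexp {Ω : Type*} [MeasurableSpace Ω] (μ : Measure Ω) [IsFiniteMeasure μ]
    {E : Set Ω} (hE : MeasurableSet E) {X : Ω → ℝ} (hX : Integrable X μ) :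
    ∫ ω in E, (X ω - cexp μ X E) ∂μ = 0 := by
  have h1 : ∫ ω in E, (X ω - cexp μ X E) ∂μ
      = (∫ ω in E, X ω ∂μ) - (μ E).toReal * cexp μ X E := by
    rw [integral_sub hX.restrict (integrable_const _), setIntegral_const, smul_eq_mul, measureReal_def]
  rcases eq_or_ne (μ E) 0 with h0 | h0
  · have hres : μ.restrict E = 0 := Measure.restrict_eq_zero.mpr h0
    rw [h1, hres]
    simp [h0]
  · have hne : (μ E).toReal ≠ 0 := ENNReal.toReal_ne_zero.mpr ⟨h0, measure_ne_top μ E⟩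
    rw [h1, cexp_eq_inv_mul]
    field_simp
    simp

/-- Theorem 2: the efficient influence function, evaluated at the true
nuisance values, has mean zero under `μ`. -/
theorem eif_mean_zero
    {Ω : Type*} [MeasurableSpace Ω] (μ : Measure Ω) [IsProbabilityMeasure μ]
    {𝒲 : Type*} [Fintype 𝒲] [MeasurableSpace 𝒲] [MeasurableSingletonClass 𝒲]
    (S A : Ω → Bool) (W : Ω → 𝒲) (Y₀ Y₁ : Ω → ℝ)
    (hS : Measurable S) (hA : Measurable A) (hW : Measurable W)
    (hY₀ : Integrable Y₀ μ) (hY₁ : Integrable Y₁ μ)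
    (astar : Bool)
    (hc : 0 < μ (evtAS A S astar false))
    (hpos : ∀ w : 𝒲, 0 < μ {ω | W ω = w} →
      0 < μ (evtWAS W A S w true true) ∧ 0 < μ (evtWAS W A S w false true)) :
    ∫ ω,
      ((if A ω = true ∧ S ω = true then
          gprop μ W A S astar false (W ω)
            / ((μ (evtAS A S astar false)).toReal * gprop μ W A S true true (W ω))
            * ((Y₁ ω - Y₀ ω) - mfun μ W A S Y₀ Y₁ true (W ω))
        else 0)
      - (if A ω = false ∧ S ω = true then
          gprop μ W A S astar false (W ω)
            / ((μ (evtAS A S astar false)).toReal * gprop μ W A S false true (W ω))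
            * ((Y₁ ω - Y₀ ω) - mfun μ W A S Y₀ Y₁ false (W ω))
        else 0)
      + (if A ω = astar ∧ S ω = false then
          (1 / (μ (evtAS A S astar false)).toReal)
            * (mfun μ W A S Y₀ Y₁ true (W ω) - mfun μ W A S Y₀ Y₁ false (W ω))
        else 0)
      - psiParam μ W A S Y₀ Y₁ astar) ∂μ
    = 0 := by
  have hΔ : Integrable (fun ω => Y₁ ω - Y₀ ω) μ := hY₁.sub hY₀
  have hEWAS : ∀ (w : 𝒲) (a s : Bool), MeasurableSet (evtWAS W A S w a s) := by
    intro w a s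
    exact (hW (measurableSet_singleton w)).inter
      ((hA (measurableSet_singleton a)).inter (hS (measurableSet_singleton s)))
  have hEAS : ∀ (a s : Bool), MeasurableSet (evtAS A S a s) := by
    intro a s
    exact (hA (measurableSet_singleton a)).inter (hS (measurableSet_singleton s))
  -- the two "study sample" terms
  have hTerm : ∀ (a : Bool) (f : 𝒲 → ℝ),
      Integrable (fun ω => if A ω = a ∧ S ω = true then
        f (W ω) * ((Y₁ ω - Y₀ ω) - mfun μ W A S Y₀ Y₁ a (W ω)) else 0) μ ∧
      ∫ ω, (if A ω = a ∧ S ω = true then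
        f (W ω) * ((Y₁ ω - Y₀ ω) - mfun μ W A S Y₀ Y₁ a (W ω)) else 0) ∂μ = 0 := by
    intro a f
    have hfun : (fun ω => if A ω = a ∧ S ω = true then
          f (W ω) * ((Y₁ ω - Y₀ ω) - mfun μ W A S Y₀ Y₁ a (W ω)) else 0)
        = fun ω => ∑ w : 𝒲, Set.indicator (evtWAS W A S w a true)
            (fun ω => f w * ((Y₁ ω - Y₀ ω) - mfun μ W A S Y₀ Y₁ a w)) ω := by
      funext ω
      rw [Finset.sum_eq_single (W ω)]
      · by_cases hcond : A ω = a ∧ S ω = true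
        · simp [Set.indicator_apply, evtWAS, hcond]
        · simp [Set.indicator_apply, evtWAS, hcond]
      · intro w _ hw
        simp [Set.indicator_apply, evtWAS, Ne.symm hw]
      · simp
    have hintw : ∀ w : 𝒲, Integrable (Set.indicator (evtWAS W A S w a true)
        (fun ω => f w * ((Y₁ ω - Y₀ ω) - mfun μ W A S Y₀ Y₁ a w))) μ :=
      fun w => ((hΔ.sub (integrable_const _)).const_mul _).indicator (hEWAS w a true)
    constructor
    · rw [hfun]; exact integrable_finset_sum _ (fun w _ => hintw w)
    · rw [hfun, integral_finset_sum _ (fun w _ => hintw w)]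
      refine Finset.sum_eq_zero (fun w _ => ?_)
      rw [integral_indicator (hEWAS w a true), integral_const_mul]
      have : ∫ ω in evtWAS W A S w a true,
          ((Y₁ ω - Y₀ ω) - mfun μ W A S Y₀ Y₁ a w) ∂μ = 0 :=
        setIntegral_sub_cexp μ (hEWAS w a true) hΔ
      rw [this, mul_zero]
  -- the target-population term
  have hmW : Integrable (fun ω =>
      mfun μ W A S Y₀ Y₁ true (W ω) - mfun μ W A S Y₀ Y₁ false (W ω)) μ := by
    set h : 𝒲 → ℝ := fun w => mfun μ W A S Y₀ Y₁ true w - mfun μ W A S Y₀ Y₁ false w with hh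
    have hmeas : Measurable (fun ω => h (W ω)) := (measurable_of_countable h).comp hW
    refine (integrable_const (∑ w : 𝒲, |h w|)).mono' hmeas.aestronglyMeasurable
      (Filter.Eventually.of_forall fun ω => ?_)
    simpa using Finset.single_le_sum (f := fun w => |h w|)
      (fun w _ => abs_nonneg _) (Finset.mem_univ (W ω))
  have hT3fun : (fun ω => if A ω = astar ∧ S ω = false then
        (1 / (μ (evtAS A S astar false)).toReal)
          * (mfun μ W A S Y₀ Y₁ true (W ω) - mfun μ W A S Y₀ Y₁ false (W ω)) else 0)
      = Set.indicator (evtAS A S astar false)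
          (fun ω => (1 / (μ (evtAS A S astar false)).toReal)
            * (mfun μ W A S Y₀ Y₁ true (W ω) - mfun μ W A S Y₀ Y₁ false (W ω))) := by
    funext ω
    simp [Set.indicator_apply, evtAS]
  have hintT3 : Integrable (fun ω => if A ω = astar ∧ S ω = false then
      (1 / (μ (evtAS A S astar false)).toReal)
        * (mfun μ W A S Y₀ Y₁ true (W ω) - mfun μ W A S Y₀ Y₁ false (W ω)) else 0) μ := by
    rw [hT3fun]
    exact (hmW.const_mul _).indicator (hEAS astar false)
  have hT3 : ∫ ω, (if A ω = astar ∧ S ω = false then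
      (1 / (μ (evtAS A S astar false)).toReal)
        * (mfun μ W A S Y₀ Y₁ true (W ω) - mfun μ W A S Y₀ Y₁ false (W ω)) else 0) ∂μ
      = psiParam μ W A S Y₀ Y₁ astar := by
    rw [hT3fun, integral_indicator (hEAS astar false), integral_const_mul,
      psiParam, cexp_eq_inv_mul, one_div]
  have hc0 : (μ (evtAS A S astar false)).toReal ≠ 0 :=
    ENNReal.toReal_ne_zero.mpr ⟨hc.ne', measure_ne_top _ _⟩
  obtain ⟨hint1, hT1⟩ := hTerm true (fun w => gprop μ W A S astar false w
    / ((μ (evtAS A S astar false)).toReal * gprop μ W A S true true w))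
  obtain ⟨hint2, hT2⟩ := hTerm false (fun w => gprop μ W A S astar false w
    / ((μ (evtAS A S astar false)).toReal * gprop μ W A S false true w))
  have hf12 : Integrable (fun ω =>
      (if A ω = true ∧ S ω = true then
          gprop μ W A S astar false (W ω)
            / ((μ (evtAS A S astar false)).toReal * gprop μ W A S true true (W ω))
            * ((Y₁ ω - Y₀ ω) - mfun μ W A S Y₀ Y₁ true (W ω))
        else 0)
      - (if A ω = false ∧ S ω = true then
          gprop μ W A S astar false (W ω)
            / ((μ (evtAS A S astar false)).toReal * gprop μ W A S false true (W ω))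
            * ((Y₁ ω - Y₀ ω) - mfun μ W A S Y₀ Y₁ false (W ω))
        else 0)) μ := hint1.sub hint2
  have hf : Integrable (fun ω =>
      (if A ω = true ∧ S ω = true then
          gprop μ W A S astar false (W ω)
            / ((μ (evtAS A S astar false)).toReal * gprop μ W A S true true (W ω))
            * ((Y₁ ω - Y₀ ω) - mfun μ W A S Y₀ Y₁ true (W ω))
        else 0)
      - (if A ω = false ∧ S ω = true then
          gprop μ W A S astar false (W ω)
            / ((μ (evtAS A S astar false)).toReal * gprop μ W A S false true (W ω))
            * ((Y₁ ω - Y₀ ω) - mfun μ W A S Y₀ Y₁ false (W ω))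
        else 0)
      + (if A ω = astar ∧ S ω = false then
          (1 / (μ (evtAS A S astar false)).toReal)
            * (mfun μ W A S Y₀ Y₁ true (W ω) - mfun μ W A S Y₀ Y₁ false (W ω))
        else 0)) μ := hf12.add hintT3
  rw [integral_sub hf (integrable_const _), integral_add hf12 hintT3,
    integral_sub hint1 hint2, hT1, hT2, hT3, integral_const]
  simp

end
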